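/- (Unconstrained thermal channel is the completely depolarizing channel.) The completely depolarizing channel D_{A→B}(X) = tr(X)·1_B/d_B is the unique maximizer of the channel entropy S(N) over all quantum channels N_{A→B}, and its channel entropy is S(D) = log d_B. -/

import Mathlib

open Matrix BigOperators MeasureTheory
open scoped Kronecker ComplexOrder

noncomputable section

namespace ThermalChannel

/-- Square complex matrices of size `d`. -/
abbrev Mat (d : ℕ) := Matrix (Fin d) (Fin d) ℂ

/-- A density matrix: positive semidefinite with unit trace. -/
def IsDensity {ι : Type*} [Fintype ι] (ρ : Matrix ι ι ℂ) : Prop :=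
  ρ.PosSemidef ∧ ρ.trace = 1

/-- The map `L ⊗ id_R` applied to a matrix on `A × R`. -/
def extendId {A B R : Type*} [Fintype A] [Fintype B] [Fintype R]
    (L : Matrix A A ℂ →ₗ[ℂ] Matrix B B ℂ)
    (M : Matrix (A × R) (A × R) ℂ) : Matrix (B × R) (B × R) ℂ :=
  Matrix.of fun p q => L (Matrix.of fun x y => M (x, p.2) (y, q.2)) p.1 q.1

/-- A quantum channel: a completely positive trace-preserving linear map. -/
def IsChannel {A B : Type*} [Fintype A] [Fintype B]
    (L : Matrix A A ℂ →ₗ[ℂ] Matrix B B ℂ) : Prop :=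
  (∀ (k : ℕ) (M : Matrix (A × Fin k) (A × Fin k) ℂ), M.PosSemidef →
    (extendId L M).PosSemidef) ∧
  (∀ M, (L M).trace = M.trace)

/-- The (unnormalized) maximally entangled projector `|Φ⟩⟨Φ|`,
`|Φ⟩ = ∑ j |j⟩|j⟩`. -/
def PhiMat (A : Type*) [DecidableEq A] : Matrix (A × A) (A × A) ℂ :=
  Matrix.of fun p q => if p.1 = p.2 ∧ q.1 = q.2 then 1 else 0

/-- The Choi matrix `J(L) = (L ⊗ id)(Φ)`. -/
def choi {A B : Type*} [Fintype A] [DecidableEq A] [Fintype B]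
    (L : Matrix A A ℂ →ₗ[ℂ] Matrix B B ℂ) : Matrix (B × A) (B × A) ℂ :=
  extendId L (PhiMat A)

/-- Partial trace over the first tensor factor. -/
def ptraceFst {B R : Type*} [Fintype B] (M : Matrix (B × R) (B × R) ℂ) :
    Matrix R R ℂ :=
  Matrix.of fun x y => ∑ b, M (b, x) (b, y)

/-- Partial trace over the second tensor factor. -/
def ptraceSnd {B R : Type*} [Fintype R] (M : Matrix (B × R) (B × R) ℂ) :
    Matrix B B ℂ :=
  Matrix.of fun x y => ∑ r, M (x, r) (y, r)

open Classical in
/-- Functional calculus for Hermitian matrices (junk value `0` for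
non-Hermitian matrices): apply `f` to the eigenvalues. -/
def mfun {ι : Type*} [Fintype ι] [DecidableEq ι] (f : ℝ → ℝ) (M : Matrix ι ι ℂ) :
    Matrix ι ι ℂ :=
  if h : M.IsHermitian then
    (h.eigenvectorUnitary : Matrix ι ι ℂ) *
      Matrix.diagonal (fun i => (f (h.eigenvalues i) : ℂ)) *
      star (h.eigenvectorUnitary : Matrix ι ι ℂ)
  else 0

/-- Matrix square root (of a positive semidefinite matrix). -/
def msqrt {ι : Type*} [Fintype ι] [DecidableEq ι] (M : Matrix ι ι ℂ) : Matrix ι ι ℂ :=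
  mfun Real.sqrt M

open Classical in
/-- Moore–Penrose pseudo-inverse square root of a positive semidefinite matrix. -/
def minvsqrt {ι : Type*} [Fintype ι] [DecidableEq ι] (M : Matrix ι ι ℂ) : Matrix ι ι ℂ :=
  mfun (fun x => if x = 0 then 0 else (Real.sqrt x)⁻¹) M

open Classical in
/-- Orthogonal projector onto the support. -/
def suppProj {ι : Type*} [Fintype ι] [DecidableEq ι] (M : Matrix ι ι ℂ) : Matrix ι ι ℂ :=
  mfun (fun x => if x = 0 then 0 else 1) M

/-- Matrix logarithm, taken spectrally on the support (`log 0 := 0`). -/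
def mlog {ι : Type*} [Fintype ι] [DecidableEq ι] (M : Matrix ι ι ℂ) : Matrix ι ι ℂ :=
  mfun Real.log M

/-- `M log M`, defined spectrally with `0 log 0 := 0`. -/
def xlogx {ι : Type*} [Fintype ι] [DecidableEq ι] (M : Matrix ι ι ℂ) : Matrix ι ι ℂ :=
  mfun (fun x => x * Real.log x) M

/-- Matrix exponential (of a Hermitian matrix). -/
def mexp {ι : Type*} [Fintype ι] [DecidableEq ι] (M : Matrix ι ι ℂ) : Matrix ι ι ℂ :=
  mfun Real.exp M

open Classical in
/-- Von Neumann entropy `S(ρ) = -∑ λᵢ log λᵢ` (junk value `0` for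
non-Hermitian matrices); `0 log 0 := 0` since `Real.log 0 = 0`. -/
def vnEntropy {ι : Type*} [Fintype ι] [DecidableEq ι] (M : Matrix ι ι ℂ) : ℝ :=
  if h : M.IsHermitian then -∑ i, h.eigenvalues i * Real.log (h.eigenvalues i) else 0

/-- Conditional entropy `S(B|R)_τ = S(τ) - S(tr_B τ)`. -/
def condEntropy {B R : Type*} [Fintype B] [Fintype R] [DecidableEq B] [DecidableEq R]
    (τ : Matrix (B × R) (B × R) ℂ) : ℝ :=
  vnEntropy τ - vnEntropy (ptraceFst τ)

/-- The channel entropy `S(N) = min_{ρ_{AR}} S(B|R)_{(N ⊗ id)(ρ_{AR})}`. -/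
def channelEntropy {A B : Type*} [Fintype A] [Fintype B] [DecidableEq A] [DecidableEq B]
    (L : Matrix A A ℂ →ₗ[ℂ] Matrix B B ℂ) : ℝ :=
  sInf {x | ∃ ρ : Matrix (A × A) (A × A) ℂ, IsDensity ρ ∧ x = condEntropy (extendId L ρ)}

/-- The pure state `|φ⟩⟨φ|` with `|φ⟩ = φ_R^{1/2} |Φ_{A:R}⟩`, the square root
acting on the reference factor `R`. -/
def stateAR {A : Type*} [Fintype A] [DecidableEq A] (φR : Matrix A A ℂ) :
    Matrix (A × A) (A × A) ℂ :=
  ((1 : Matrix A A ℂ) ⊗ₖ msqrt φR) * PhiMat A * ((1 : Matrix A A ℂ) ⊗ₖ msqrt φR)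

/-- A channel is feasible if it reproduces the prescribed expectation values
`tr[C^j J(N)] = q_j`. -/
def Feasible {dA dB J : ℕ} (C : Fin J → Matrix (Fin dB × Fin dA) (Fin dB × Fin dA) ℂ)
    (q : Fin J → ℝ) (L : Mat dA →ₗ[ℂ] Mat dB) : Prop :=
  IsChannel L ∧ ∀ j, (C j * choi L).trace = (q j : ℂ)

/-- A thermal quantum channel: an optimizer of the maximum channel entropy
problem. -/
def IsThermalChannel {dA dB J : ℕ}
    (C : Fin J → Matrix (Fin dB × Fin dA) (Fin dB × Fin dA) ℂ) (q : Fin J → ℝ)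
    (T : Mat dA →ₗ[ℂ] Mat dB) : Prop :=
  Feasible C q T ∧ ∀ L, Feasible C q L → channelEntropy L ≤ channelEntropy T


/-- The completely depolarizing channel `D(X) = tr(X) · 1/d_B`. -/
def depol (dA dB : ℕ) : Mat dA →ₗ[ℂ] Mat dB :=
  LinearMap.smulRight (Matrix.traceLinearMap (Fin dA) ℂ ℂ)
    ((dB : ℂ)⁻¹ • (1 : Mat dB))


/-! ### Auxiliary spectral lemmas -/

section Spectral
variable {ι : Type*} [Fintype ι] [DecidableEq ι]

lemma det_smul_one_sub_conj {W : Matrix ι ι ℂ} (hW : W * Wᴴ = 1) (D : Matrix ι ι ℂ) (t : ℂ) :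
    (t • (1 : Matrix ι ι ℂ) - W * D * Wᴴ).det = (t • (1 : Matrix ι ι ℂ) - D).det := by
  have h1 : t • (1 : Matrix ι ι ℂ) - W * D * Wᴴ = W * (t • (1 : Matrix ι ι ℂ) - D) * Wᴴ := by
    rw [Matrix.mul_sub, Matrix.sub_mul]
    congr 1
    rw [Matrix.mul_smul, mul_one, Matrix.smul_mul, hW]
  have h2 : W.det * Wᴴ.det = 1 := by rw [← Matrix.det_mul, hW, Matrix.det_one]
  rw [h1, Matrix.det_mul, Matrix.det_mul]
  calc W.det * (t • (1:Matrix ι ι ℂ) - D).det * Wᴴ.det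
      = (t • (1:Matrix ι ι ℂ) - D).det * (W.det * Wᴴ.det) := by ring
    _ = (t • (1:Matrix ι ι ℂ) - D).det := by rw [h2, mul_one]

lemma prod_sub_eq_det {M : Matrix ι ι ℂ} (v : ι → ℝ) (V : Matrix ι ι ℂ) (hV : V * Vᴴ = 1)
    (hMv : M = V * Matrix.diagonal (fun i => (v i : ℂ)) * Vᴴ) (t : ℂ) :
    ∏ i, (t - (v i : ℂ)) = (t • (1 : Matrix ι ι ℂ) - M).det := by
  rw [hMv, det_smul_one_sub_conj hV, Matrix.smul_one_eq_diagonal, Matrix.diagonal_sub,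
    Matrix.det_diagonal]

lemma eigenvectorUnitary_mul_star {M : Matrix ι ι ℂ} (h : M.IsHermitian) :
    (h.eigenvectorUnitary : Matrix ι ι ℂ) * (h.eigenvectorUnitary : Matrix ι ι ℂ)ᴴ = 1 := by
  rw [← Matrix.star_eq_conjTranspose]
  exact Matrix.mem_unitaryGroup_iff.mp h.eigenvectorUnitary.2

lemma spectral_theorem' {M : Matrix ι ι ℂ} (h : M.IsHermitian) :
    M = (h.eigenvectorUnitary : Matrix ι ι ℂ) *
      Matrix.diagonal (fun i => (h.eigenvalues i : ℂ)) *
      (h.eigenvectorUnitary : Matrix ι ι ℂ)ᴴ := by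
  conv_lhs => rw [h.spectral_theorem]
  rfl

lemma eigs_multiset {M : Matrix ι ι ℂ} (h : M.IsHermitian)
    {W : Matrix ι ι ℂ} (hW : W * Wᴴ = 1) (d : ι → ℝ)
    (hM : M = W * Matrix.diagonal (fun i => (d i : ℂ)) * Wᴴ) :
    Multiset.map (fun i => (h.eigenvalues i : ℂ)) Finset.univ.val
      = Multiset.map (fun i => (d i : ℂ)) Finset.univ.val := by
  have key : (Multiset.map (fun a => Polynomial.X - Polynomial.C a)
        (Multiset.map (fun i => (h.eigenvalues i : ℂ)) Finset.univ.val)).prod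
      = (Multiset.map (fun a => Polynomial.X - Polynomial.C a)
        (Multiset.map (fun i => (d i : ℂ)) Finset.univ.val)).prod := by
    rw [Multiset.map_map, Multiset.map_map]
    rw [← Finset.prod_eq_multiset_prod, ← Finset.prod_eq_multiset_prod]
    apply Polynomial.funext
    intro t
    rw [Polynomial.eval_prod, Polynomial.eval_prod]
    simp only [Function.comp, Polynomial.eval_sub, Polynomial.eval_X, Polynomial.eval_C]
    rw [prod_sub_eq_det h.eigenvalues _ (eigenvectorUnitary_mul_star h) (spectral_theorem' h) t,
      prod_sub_eq_det d W hW hM t]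
  have h2 := congrArg Polynomial.roots key
  rwa [Polynomial.roots_multiset_prod_X_sub_C, Polynomial.roots_multiset_prod_X_sub_C] at h2

lemma sum_eigs_eq {M : Matrix ι ι ℂ} (h : M.IsHermitian) {W : Matrix ι ι ℂ}
    (hW : W * Wᴴ = 1) (d : ι → ℝ) (hM : M = W * Matrix.diagonal (fun i => (d i : ℂ)) * Wᴴ)
    (g : ℝ → ℝ) : ∑ i, g (h.eigenvalues i) = ∑ i, g (d i) := by
  have h2 := congrArg (fun s => (Multiset.map (fun z : ℂ => g z.re) s).sum)
    (eigs_multiset h hW d hM)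
  simp only [Multiset.map_map, Function.comp, Complex.ofReal_re] at h2
  exact h2

lemma isHermitian_conj_diag (W : Matrix ι ι ℂ) (d : ι → ℝ) :
    (W * Matrix.diagonal (fun i => (d i : ℂ)) * Wᴴ).IsHermitian := by
  have hd : (Matrix.diagonal (fun i => (d i : ℂ))).IsHermitian := by
    have hs : (star fun i => ((d i : ℝ) : ℂ)) = fun i => ((d i : ℝ) : ℂ) := by
      funext i
      exact Complex.conj_ofReal _
    rw [Matrix.IsHermitian, Matrix.diagonal_conjTranspose, hs]
  exact Matrix.isHermitian_mul_mul_conjTranspose W hd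

lemma vnEntropy_eq_sum {M : Matrix ι ι ℂ} (h : M.IsHermitian) :
    vnEntropy M = ∑ i, Real.negMulLog (h.eigenvalues i) := by
  rw [vnEntropy, dif_pos h]
  simp [Real.negMulLog, Finset.sum_neg_distrib]

lemma vnEntropy_diag {W : Matrix ι ι ℂ} (hW : W * Wᴴ = 1) (d : ι → ℝ) :
    vnEntropy (W * Matrix.diagonal (fun i => (d i : ℂ)) * Wᴴ) = ∑ i, Real.negMulLog (d i) := by
  rw [vnEntropy_eq_sum (isHermitian_conj_diag W d),
    sum_eigs_eq (isHermitian_conj_diag W d) hW d rfl]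

lemma trace_eq_sum_eigs {M : Matrix ι ι ℂ} (h : M.IsHermitian) :
    M.trace = ∑ i, (h.eigenvalues i : ℂ) := by
  conv_lhs => rw [spectral_theorem' h]
  rw [Matrix.trace_mul_cycle]
  have h1 : (h.eigenvectorUnitary : Matrix ι ι ℂ)ᴴ * (h.eigenvectorUnitary : Matrix ι ι ℂ) = 1 := by
    rw [mul_eq_one_comm]
    exact eigenvectorUnitary_mul_star h
  rw [h1, Matrix.one_mul, Matrix.trace_diagonal]

lemma density_eigs_sum {M : Matrix ι ι ℂ} (hM : IsDensity M) :
    ∑ i, hM.1.1.eigenvalues i = 1 := by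
  have h2 : ((∑ i, hM.1.1.eigenvalues i : ℝ) : ℂ) = 1 := by
    push_cast
    exact (trace_eq_sum_eigs hM.1.1).symm.trans hM.2
  exact_mod_cast h2

end Spectral


section Entropy
variable {ι : Type*} [Fintype ι] [DecidableEq ι]

lemma density_eigs_le_one {M : Matrix ι ι ℂ} (hM : IsDensity M) (j : ι) :
    hM.1.1.eigenvalues j ≤ 1 := by
  rw [← density_eigs_sum hM]
  exact Finset.single_le_sum (fun i _ => hM.1.eigenvalues_nonneg i) (Finset.mem_univ j)

lemma vnEntropy_nonneg {M : Matrix ι ι ℂ} (hM : IsDensity M) : 0 ≤ vnEntropy M := by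
  rw [vnEntropy_eq_sum hM.1.1]
  exact Finset.sum_nonneg fun i _ =>
    Real.negMulLog_nonneg (hM.1.eigenvalues_nonneg i) (density_eigs_le_one hM i)

variable [Nonempty ι]

lemma card_inv_sum_one : ∑ _i : ι, ((Fintype.card ι : ℝ))⁻¹ = 1 := by
  rw [Finset.sum_const, Finset.card_univ, nsmul_eq_mul]
  rw [mul_inv_cancel₀]
  exact_mod_cast Fintype.card_ne_zero

lemma negMulLog_card_inv :
    Real.negMulLog ((Fintype.card ι : ℝ))⁻¹
      = ((Fintype.card ι : ℝ))⁻¹ * Real.log (Fintype.card ι) := by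
  rw [Real.negMulLog, Real.log_inv]
  ring

lemma density_sum_smul_eigs {M : Matrix ι ι ℂ} (hM : IsDensity M) :
    ∑ i, ((Fintype.card ι : ℝ))⁻¹ • hM.1.1.eigenvalues i = ((Fintype.card ι : ℝ))⁻¹ := by
  simp only [smul_eq_mul, ← Finset.mul_sum]
  rw [density_eigs_sum hM, mul_one]

lemma vnEntropy_le_log {M : Matrix ι ι ℂ} (hM : IsDensity M) :
    vnEntropy M ≤ Real.log (Fintype.card ι) := by
  have hn : (0:ℝ) < (Fintype.card ι : ℝ) := by exact_mod_cast Fintype.card_pos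
  have key := Real.concaveOn_negMulLog.le_map_sum (t := Finset.univ)
    (w := fun _ : ι => ((Fintype.card ι : ℝ))⁻¹) (p := hM.1.1.eigenvalues)
    (fun i _ => by positivity) (card_inv_sum_one)
    (fun i _ => hM.1.eigenvalues_nonneg i)
  rw [density_sum_smul_eigs hM, negMulLog_card_inv] at key
  simp only [smul_eq_mul, ← Finset.mul_sum] at key
  rw [vnEntropy_eq_sum hM.1.1]
  exact le_of_mul_le_mul_left key (by positivity) |>.trans (le_refl _) |>.trans (le_refl _)

lemma vnEntropy_eq_log_imp {M : Matrix ι ι ℂ} (hM : IsDensity M)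
    (h : vnEntropy M = Real.log (Fintype.card ι)) :
    M = ((Fintype.card ι : ℂ))⁻¹ • (1 : Matrix ι ι ℂ) := by
  have hn : (0:ℝ) < (Fintype.card ι : ℝ) := by exact_mod_cast Fintype.card_pos
  have key := (Real.strictConcaveOn_negMulLog.map_sum_eq_iff (t := Finset.univ)
    (w := fun _ : ι => ((Fintype.card ι : ℝ))⁻¹) (p := hM.1.1.eigenvalues)
    (fun i _ => by positivity) (card_inv_sum_one)
    (fun i _ => hM.1.eigenvalues_nonneg i))
  rw [density_sum_smul_eigs hM, negMulLog_card_inv] at key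
  have heq : ((Fintype.card ι : ℝ))⁻¹ * Real.log (Fintype.card ι)
      = ∑ i, ((Fintype.card ι : ℝ))⁻¹ • Real.negMulLog (hM.1.1.eigenvalues i) := by
    simp only [smul_eq_mul, ← Finset.mul_sum]
    rw [← vnEntropy_eq_sum hM.1.1, h]
  have hall := key.mp heq
  have hev : ∀ j : ι, hM.1.1.eigenvalues j = ((Fintype.card ι : ℝ))⁻¹ := fun j =>
    hall j (Finset.mem_univ j)
  have hfun : (fun i : ι => ((hM.1.1.eigenvalues i : ℝ) : ℂ))
      = fun _ : ι => ((Fintype.card ι : ℂ))⁻¹ := by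
    funext i
    rw [hev i]
    push_cast
    rfl
  conv_lhs => rw [spectral_theorem' hM.1.1]
  rw [hfun, ← Matrix.smul_one_eq_diagonal, Matrix.mul_smul, Matrix.smul_mul, Matrix.mul_one,
    eigenvectorUnitary_mul_star hM.1.1]

lemma vnEntropy_inv_card_smul_one :
    vnEntropy (((Fintype.card ι : ℂ))⁻¹ • (1 : Matrix ι ι ℂ)) = Real.log (Fintype.card ι) := by
  have hn : (0:ℝ) < (Fintype.card ι : ℝ) := by exact_mod_cast Fintype.card_pos
  have h0 : ((Fintype.card ι : ℂ))⁻¹ • (1 : Matrix ι ι ℂ)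
      = (1 : Matrix ι ι ℂ)
        * Matrix.diagonal (fun _ : ι => Complex.ofReal (((Fintype.card ι : ℝ))⁻¹))
        * (1 : Matrix ι ι ℂ)ᴴ := by
    rw [Matrix.one_mul, Matrix.conjTranspose_one, Matrix.mul_one, Matrix.smul_one_eq_diagonal]
    push_cast
    rfl
  rw [h0, vnEntropy_diag (by simp) _]
  rw [Finset.sum_const, Finset.card_univ, nsmul_eq_mul, negMulLog_card_inv]
  field_simp

end Entropy


section Structure
variable {A B R : Type*} [Fintype A] [Fintype B] [Fintype R]
  [DecidableEq A] [DecidableEq B] [DecidableEq R]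

lemma trace_extendId (L : Matrix A A ℂ →ₗ[ℂ] Matrix B B ℂ)
    (hL : ∀ X, (L X).trace = X.trace) (M : Matrix (A × R) (A × R) ℂ) :
    (extendId L M).trace = M.trace := by
  rw [Matrix.trace, Matrix.trace, Fintype.sum_prod_type, Fintype.sum_prod_type,
    Finset.sum_comm, Finset.sum_comm (s := Finset.univ) (t := Finset.univ)
      (f := fun a r => Matrix.diag M (a, r))]
  refine Finset.sum_congr rfl fun r _ => ?_
  have h := hL (Matrix.of fun x y => M (x, r) (y, r))
  simpa [Matrix.trace, Matrix.diag, extendId] using h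

lemma ptraceFst_trace (M : Matrix (B × R) (B × R) ℂ) : (ptraceFst M).trace = M.trace := by
  rw [Matrix.trace, Matrix.trace, Fintype.sum_prod_type, Finset.sum_comm]
  rfl

lemma posSemidef_sum {n ι' : Type*} [Fintype n] (s : Finset ι') (f : ι' → Matrix n n ℂ)
    (h : ∀ i ∈ s, (f i).PosSemidef) : (∑ i ∈ s, f i).PosSemidef :=
  Finset.sum_induction f _ (fun _ _ ha hb => ha.add hb) Matrix.PosSemidef.zero h

lemma ptraceFst_eq_sum (M : Matrix (B × R) (B × R) ℂ) :
    ptraceFst M = ∑ b : B, M.submatrix (fun r : R => (b, r)) (fun r : R => (b, r)) := by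
  ext r r'
  simp [ptraceFst, Matrix.sum_apply]

lemma ptraceFst_posSemidef {M : Matrix (B × R) (B × R) ℂ} (hM : M.PosSemidef) :
    (ptraceFst M).PosSemidef := by
  rw [ptraceFst_eq_sum]
  exact posSemidef_sum _ _ fun b _ => hM.submatrix _

lemma ptraceFst_density {M : Matrix (B × R) (B × R) ℂ} (hM : IsDensity M) :
    IsDensity (ptraceFst M) :=
  ⟨ptraceFst_posSemidef hM.1, (ptraceFst_trace M).trans hM.2⟩

lemma one_kron_conjTranspose (X : Matrix R R ℂ) :
    ((1 : Matrix B B ℂ) ⊗ₖ X)ᴴ = (1 : Matrix B B ℂ) ⊗ₖ Xᴴ := by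
  ext ⟨b, r⟩ ⟨b', r'⟩
  simp only [Matrix.conjTranspose_apply, Matrix.kroneckerMap_apply, Matrix.one_apply]
  by_cases h : b = b'
  · subst h
    simp
  · simp [h, Ne.symm h]

lemma one_kron_posSemidef {S : Matrix R R ℂ} (hS : S.PosSemidef) :
    ((1 : Matrix B B ℂ) ⊗ₖ S).PosSemidef := by
  exact Matrix.PosSemidef.one.kronecker hS

lemma posSemidef_real_smul {n : Type*} [Fintype n] {M : Matrix n n ℂ} (hM : M.PosSemidef)
    {c : ℝ} (hc : 0 ≤ c) : ((c : ℂ) • M).PosSemidef := by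
  constructor
  · unfold Matrix.IsHermitian
    rw [Matrix.conjTranspose_smul, hM.1.eq]
    congr 1
    exact Complex.conj_ofReal c
  · exact (hM.smul (a := (c : ℂ)) (by exact_mod_cast hc)).2

lemma extendId_smul (L : Matrix A A ℂ →ₗ[ℂ] Matrix B B ℂ) (c : ℂ)
    (M : Matrix (A × R) (A × R) ℂ) :
    extendId L (c • M) = c • extendId L M := by
  ext ⟨b, r⟩ ⟨b', r'⟩
  have h : (Matrix.of fun x y => (c • M) (x, r) (y, r'))
      = c • (Matrix.of fun x y => M (x, r) (y, r')) := by
    ext x y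
    simp
  show L (Matrix.of fun x y => (c • M) (x, r) (y, r')) b b'
      = (c • extendId L M) (b, r) (b', r')
  rw [h, LinearMap.map_smul]
  rfl

end Structure


section Phi
variable (A : Type*) [Fintype A] [DecidableEq A]

/-- The maximally entangled vector. -/
def phiVec : A × A → ℂ := fun p => if p.1 = p.2 then 1 else 0

lemma phiMat_eq : PhiMat A = Matrix.vecMulVec (phiVec A) (star (phiVec A)) := by
  ext p q
  simp only [PhiMat, Matrix.of_apply, Matrix.vecMulVec_apply, phiVec, Pi.star_apply]
  by_cases h1 : p.1 = p.2 <;> by_cases h2 : q.1 = q.2 <;> simp [h1, h2]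

lemma phiMat_posSemidef : (PhiMat A).PosSemidef := by
  rw [phiMat_eq, Matrix.vecMulVec_eq Unit]
  have h : (Matrix.replicateRow Unit (star (phiVec A))) = (Matrix.replicateCol Unit (phiVec A))ᴴ := by
    ext i j
    simp [Matrix.replicateRow, Matrix.replicateCol, Matrix.conjTranspose_apply]
  rw [h]
  exact Matrix.posSemidef_self_mul_conjTranspose _

lemma phiMat_trace : (PhiMat A).trace = (Fintype.card A : ℂ) := by
  rw [Matrix.trace, Fintype.sum_prod_type]
  have h : ∀ a : A, (∑ b : A, Matrix.diag (PhiMat A) (a, b)) = 1 := by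
    intro a
    have h2 : ∀ b : A, Matrix.diag (PhiMat A) (a, b) = if b = a then (1:ℂ) else 0 := by
      intro b
      simp only [Matrix.diag, PhiMat, Matrix.of_apply, and_self]
      by_cases hb : a = b
      · subst hb
        simp
      · simp only [hb, if_false]
        rw [if_neg (fun hc : b = a => hb hc.symm)]
    rw [Finset.sum_congr rfl fun b _ => h2 b,
      Finset.sum_ite_eq' Finset.univ a fun _ => (1:ℂ)]
    simp
  rw [Finset.sum_congr rfl fun a _ => h a, Finset.sum_const, Finset.card_univ,
    nsmul_eq_mul, mul_one]

lemma ptraceFst_smul {B R : Type*} [Fintype B] [Fintype R] (c : ℂ)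
    (M : Matrix (B × R) (B × R) ℂ) : ptraceFst (c • M) = c • ptraceFst M := by
  ext r r'
  simp [ptraceFst, Finset.mul_sum]

lemma ptraceFst_phiMat : ptraceFst (PhiMat A) = (1 : Matrix A A ℂ) := by
  ext r r'
  simp only [ptraceFst, PhiMat, Matrix.of_apply, Matrix.one_apply, ite_and]
  rw [Finset.sum_ite_eq' Finset.univ r (fun x => if x = r' then (1:ℂ) else 0)]
  simp only [Finset.mem_univ, if_true]

end Phi

section Depol
variable {R : Type*} [Fintype R] [DecidableEq R] {dA dB : ℕ}

lemma extendId_depol (M : Matrix (Fin dA × R) (Fin dA × R) ℂ) :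
    extendId (depol dA dB) M = (dB : ℂ)⁻¹ • ((1 : Mat dB) ⊗ₖ ptraceFst M) := by
  ext ⟨b, r⟩ ⟨b', r'⟩
  show (depol dA dB) (Matrix.of fun x y => M (x, r) (y, r')) b b' = _
  simp only [depol, LinearMap.smulRight_apply, Matrix.traceLinearMap_apply,
    Matrix.smul_apply, Matrix.kroneckerMap_apply, Matrix.one_apply, smul_eq_mul,
    Matrix.trace, Matrix.diag, Matrix.of_apply, ptraceFst]
  by_cases h : b = b' <;> simp [h] <;> ring

lemma depol_trace_preserving (X : Mat dA) (hdB : 0 < dB) :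
    ((depol dA dB) X).trace = X.trace := by
  have hdB' : (dB : ℂ) ≠ 0 := by exact_mod_cast hdB.ne'
  simp only [depol, LinearMap.smulRight_apply, Matrix.traceLinearMap_apply,
    Matrix.trace_smul, Matrix.trace_one, smul_eq_mul, Fintype.card_fin]
  field_simp

lemma depol_channel (hdA : 0 < dA) (hdB : 0 < dB) : IsChannel (depol dA dB) := by
  constructor
  · intro k M hM
    rw [extendId_depol]
    have h1 : ((1 : Mat dB) ⊗ₖ ptraceFst M).PosSemidef :=
      one_kron_posSemidef (ptraceFst_posSemidef hM)
    have h2 := posSemidef_real_smul h1 (c := ((dB:ℝ))⁻¹) (by positivity)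
    rwa [Complex.ofReal_inv, Complex.ofReal_natCast] at h2
  · intro M
    exact depol_trace_preserving M hdB

end Depol

section KronEntropy

lemma vnEntropy_kron {m n : Type*} [Fintype m] [Fintype n] [DecidableEq m] [DecidableEq n]
    [Nonempty m] {σ : Matrix n n ℂ} (hσ : IsDensity σ) :
    vnEntropy (((Fintype.card m : ℂ))⁻¹ • ((1 : Matrix m m ℂ) ⊗ₖ σ))
      = Real.log (Fintype.card m) + vnEntropy σ := by
  have hm : (0:ℝ) < (Fintype.card m : ℝ) := by exact_mod_cast Fintype.card_pos
  set c : ℝ := ((Fintype.card m : ℝ))⁻¹ with hc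
  set U := (hσ.1.1.eigenvectorUnitary : Matrix n n ℂ) with hU
  set lam := hσ.1.1.eigenvalues with hlam
  have hk : ((1 : Matrix m m ℂ) ⊗ₖ U) * ((1 : Matrix m m ℂ) ⊗ₖ U)ᴴ = 1 := by
    rw [one_kron_conjTranspose, ← Matrix.mul_kronecker_mul, Matrix.one_mul,
      eigenvectorUnitary_mul_star hσ.1.1, Matrix.one_kronecker_one]
  have h1 : Matrix.diagonal (fun p : m × n => ((c * lam p.2 : ℝ) : ℂ))
      = ((Fintype.card m : ℂ))⁻¹
        • ((1 : Matrix m m ℂ) ⊗ₖ Matrix.diagonal (fun i => (lam i : ℂ))) := by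
    rw [← Matrix.diagonal_one (n := m), Matrix.diagonal_kronecker_diagonal,
      ← Matrix.diagonal_smul]
    refine congrArg Matrix.diagonal ?_
    funext p
    simp only [Pi.smul_apply, one_mul, smul_eq_mul, hc]
    push_cast
    ring
  have hdec : ((Fintype.card m : ℂ))⁻¹ • ((1 : Matrix m m ℂ) ⊗ₖ σ)
      = ((1 : Matrix m m ℂ) ⊗ₖ U)
        * Matrix.diagonal (fun p : m × n => ((c * lam p.2 : ℝ) : ℂ))
        * ((1 : Matrix m m ℂ) ⊗ₖ U)ᴴ := by
    rw [h1]
    conv_lhs => rw [spectral_theorem' hσ.1.1]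
    rw [Matrix.mul_smul, Matrix.smul_mul, one_kron_conjTranspose,
      ← Matrix.mul_kronecker_mul, ← Matrix.mul_kronecker_mul, Matrix.one_mul, Matrix.one_mul]
  rw [hdec, vnEntropy_diag hk]
  rw [Fintype.sum_prod_type, vnEntropy_eq_sum hσ.1.1]
  have hin : ∀ _x : m, ∑ i : n, Real.negMulLog (c * lam i)
      = Real.negMulLog c + c * ∑ i, Real.negMulLog (lam i) := by
    intro x
    have : ∀ i : n, Real.negMulLog (c * lam i)
        = lam i * Real.negMulLog c + c * Real.negMulLog (lam i) := fun i =>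
      Real.negMulLog_mul c (lam i)
    rw [Finset.sum_congr rfl fun i _ => this i, Finset.sum_add_distrib,
      ← Finset.sum_mul, density_eigs_sum hσ, one_mul, ← Finset.mul_sum]
  rw [Finset.sum_congr rfl fun x _ => hin x, Finset.sum_const, Finset.card_univ,
    nsmul_eq_mul]
  have hnc : Real.negMulLog c = c * Real.log (Fintype.card m) := negMulLog_card_inv
  rw [hnc]
  have hcc : (Fintype.card m : ℝ) * c = 1 := by
    rw [hc, mul_inv_cancel₀ (ne_of_gt hm)]
  calc (Fintype.card m : ℝ) * (c * Real.log (Fintype.card m)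
          + c * ∑ i, Real.negMulLog (lam i))
      = ((Fintype.card m : ℝ) * c) * Real.log (Fintype.card m)
        + ((Fintype.card m : ℝ) * c) * ∑ i, Real.negMulLog (lam i) := by ring
    _ = Real.log (Fintype.card m) + ∑ i, Real.negMulLog (lam i) := by
        rw [hcc, one_mul, one_mul]

end KronEntropy


section Channel

lemma ptraceFst_extendId {A B R : Type*} [Fintype A] [Fintype B] [Fintype R]
    (L : Matrix A A ℂ →ₗ[ℂ] Matrix B B ℂ) (hL : ∀ X, (L X).trace = X.trace)
    (M : Matrix (A × R) (A × R) ℂ) :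
    ptraceFst (extendId L M) = ptraceFst M := by
  ext r r'
  show ∑ b, L (Matrix.of fun x y => M (x, r) (y, r')) b b = ∑ a, M (a, r) (a, r')
  have h := hL (Matrix.of fun x y => M (x, r) (y, r'))
  simpa [Matrix.trace, Matrix.diag] using h

lemma ptraceFst_one_kron {B R : Type*} [Fintype B] [Fintype R] [DecidableEq B]
    (S : Matrix R R ℂ) :
    ptraceFst ((1 : Matrix B B ℂ) ⊗ₖ S) = (Fintype.card B : ℂ) • S := by
  ext r r'
  simp [ptraceFst, Matrix.one_apply, Finset.sum_ite_eq, Finset.card_univ]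

lemma densityME {dA : ℕ} (hdA : 0 < dA) : IsDensity ((dA:ℂ)⁻¹ • PhiMat (Fin dA)) := by
  have hdA' : (dA : ℂ) ≠ 0 := by exact_mod_cast hdA.ne'
  constructor
  · have h := posSemidef_real_smul (phiMat_posSemidef (Fin dA))
      (c := ((dA:ℝ))⁻¹) (by positivity)
    rwa [Complex.ofReal_inv, Complex.ofReal_natCast] at h
  · rw [Matrix.trace_smul, phiMat_trace, Fintype.card_fin, smul_eq_mul]
    field_simp

lemma condEntropy_depol {dA dB : ℕ} (hdB : 0 < dB)
    {ρ : Matrix (Fin dA × Fin dA) (Fin dA × Fin dA) ℂ} (hρ : IsDensity ρ) :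
    condEntropy (extendId (depol dA dB) ρ) = Real.log dB := by
  haveI : Nonempty (Fin dB) := ⟨⟨0, hdB⟩⟩
  have hdB' : (dB : ℂ) ≠ 0 := by exact_mod_cast hdB.ne'
  have hσ := ptraceFst_density hρ
  have hE : extendId (depol dA dB) ρ
      = ((Fintype.card (Fin dB) : ℂ))⁻¹ • ((1 : Mat dB) ⊗ₖ ptraceFst ρ) := by
    rw [extendId_depol, Fintype.card_fin]
  have hpt2 : ptraceFst (((Fintype.card (Fin dB) : ℂ))⁻¹ • ((1 : Mat dB) ⊗ₖ ptraceFst ρ))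
      = ptraceFst ρ := by
    rw [ptraceFst_smul, ptraceFst_one_kron, smul_smul, Fintype.card_fin,
      inv_mul_cancel₀ hdB', one_smul]
  rw [condEntropy, hE, vnEntropy_kron hσ, hpt2, Fintype.card_fin, add_sub_cancel_right]

lemma channelEntropy_depol {dA dB : ℕ} (hdA : 0 < dA) (hdB : 0 < dB) :
    channelEntropy (depol dA dB) = Real.log dB := by
  have hset : {x | ∃ ρ : Matrix (Fin dA × Fin dA) (Fin dA × Fin dA) ℂ,
        IsDensity ρ ∧ x = condEntropy (extendId (depol dA dB) ρ)} = {Real.log dB} := by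
    ext x
    simp only [Set.mem_setOf_eq, Set.mem_singleton_iff]
    constructor
    · rintro ⟨ρ, hρ, rfl⟩
      exact condEntropy_depol hdB hρ
    · rintro rfl
      exact ⟨_, densityME hdA, (condEntropy_depol hdB (densityME hdA)).symm⟩
  rw [channelEntropy, hset, csInf_singleton]

lemma choi_apply {A B : Type*} [Fintype A] [Fintype B] [DecidableEq A]
    (L : Matrix A A ℂ →ₗ[ℂ] Matrix B B ℂ) (b b' : B) (a a' : A) :
    choi L (b, a) (b', a') = L (Matrix.single a a' 1) b b' := by
  show L (Matrix.of fun x y => PhiMat A (x, a) (y, a')) b b' = _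
  have hM : (Matrix.of fun x y => PhiMat A (x, a) (y, a'))
      = Matrix.single a a' (1:ℂ) := by
    ext x y
    simp only [Matrix.of_apply, PhiMat, Matrix.single]
    by_cases h1 : x = a
    · subst h1
      by_cases h2 : y = a'
      · subst h2
        simp
      · simp [h2, Ne.symm h2]
    · by_cases h2 : y = a'
      · simp [h1, Ne.symm h1]
      · simp [h1, h2, Ne.symm h1, Ne.symm h2]
  rw [hM]

lemma eq_of_choi_eq {dA dB : ℕ} (L1 L2 : Mat dA →ₗ[ℂ] Mat dB)
    (h : choi L1 = choi L2) : L1 = L2 := by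
  apply LinearMap.ext
  intro X
  conv_lhs => rw [Matrix.matrix_eq_sum_single X]
  conv_rhs => rw [Matrix.matrix_eq_sum_single X]
  rw [map_sum, map_sum]
  refine Finset.sum_congr rfl fun a _ => ?_
  rw [map_sum, map_sum]
  refine Finset.sum_congr rfl fun a' _ => ?_
  have hsb : Matrix.single a a' (X a a') = X a a' • Matrix.single a a' (1:ℂ) := by
    ext i j
    simp [Matrix.single, Matrix.smul_apply]
  rw [hsb, LinearMap.map_smul, LinearMap.map_smul]
  congr 1
  ext b b'
  have h1 := congrFun (congrFun h (b, a)) (b', a')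
  rw [choi_apply, choi_apply] at h1
  exact h1

end Channel

/-- **The unconstrained thermal channel is the completely depolarizing
channel.**  `D(X) = tr(X)·1/d_B` is the unique maximizer of the channel
entropy among all channels, with `S(D) = log d_B`. -/
theorem unconstrained_thermal_channel_is_depolarizing
    {dA dB : ℕ} (hdA : 0 < dA) (hdB : 0 < dB) :
    IsChannel (depol dA dB) ∧
    channelEntropy (depol dA dB) = Real.log dB ∧
    ∀ N : Mat dA →ₗ[ℂ] Mat dB, IsChannel N →
      channelEntropy N ≤ Real.log dB ∧
      (channelEntropy N = Real.log dB → N = depol dA dB) := by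
  haveI nA : Nonempty (Fin dA) := ⟨⟨0, hdA⟩⟩
  haveI nB : Nonempty (Fin dB) := ⟨⟨0, hdB⟩⟩
  have hdA' : (dA : ℂ) ≠ 0 := by exact_mod_cast hdA.ne'
  have hdB' : (dB : ℂ) ≠ 0 := by exact_mod_cast hdB.ne'
  have hdAr : (dA : ℝ) ≠ 0 := by exact_mod_cast hdA.ne'
  have hdBr : (dB : ℝ) ≠ 0 := by exact_mod_cast hdB.ne'
  refine ⟨depol_channel hdA hdB, channelEntropy_depol hdA hdB, ?_⟩
  intro N hN
  have hρ : IsDensity ((dA:ℂ)⁻¹ • PhiMat (Fin dA)) := densityME hdA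
  set ρME : Matrix (Fin dA × Fin dA) (Fin dA × Fin dA) ℂ := (dA:ℂ)⁻¹ • PhiMat (Fin dA)
    with hρME
  set τ : Matrix (Fin dB × Fin dA) (Fin dB × Fin dA) ℂ := extendId N ρME with hτ
  have hτd : IsDensity τ := ⟨hN.1 dA ρME hρ.1, (trace_extendId N hN.2 ρME).trans hρ.2⟩
  have hptτ : ptraceFst τ = (dA:ℂ)⁻¹ • (1 : Mat dA) := by
    rw [hτ, ptraceFst_extendId N hN.2, hρME, ptraceFst_smul, ptraceFst_phiMat]
  have hSpt : vnEntropy (ptraceFst τ) = Real.log dA := by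
    rw [hptτ]
    have h := vnEntropy_inv_card_smul_one (ι := Fin dA)
    rwa [Fintype.card_fin] at h
  have hSτ_le : vnEntropy τ ≤ Real.log dB + Real.log dA := by
    have h := vnEntropy_le_log hτd
    rwa [Fintype.card_prod, Fintype.card_fin, Fintype.card_fin, Nat.cast_mul,
      Real.log_mul hdBr hdAr] at h
  have hcond_le : condEntropy τ ≤ Real.log dB := by
    rw [condEntropy, hSpt]
    linarith
  have hmem : condEntropy τ ∈ {x | ∃ ρ : Matrix (Fin dA × Fin dA) (Fin dA × Fin dA) ℂ,
      IsDensity ρ ∧ x = condEntropy (extendId N ρ)} := ⟨ρME, hρ, by rw [hτ]⟩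
  have hbdd : BddBelow {x | ∃ ρ : Matrix (Fin dA × Fin dA) (Fin dA × Fin dA) ℂ,
      IsDensity ρ ∧ x = condEntropy (extendId N ρ)} := by
    refine ⟨-(Real.log dA), ?_⟩
    rintro x ⟨ρ, hρ', rfl⟩
    have hd : IsDensity (extendId N ρ) :=
      ⟨hN.1 dA ρ hρ'.1, (trace_extendId N hN.2 ρ).trans hρ'.2⟩
    have h1 := vnEntropy_nonneg hd
    have h2 := vnEntropy_le_log (ptraceFst_density hd)
    rw [Fintype.card_fin] at h2
    rw [condEntropy]
    linarith
  have hle : channelEntropy N ≤ condEntropy τ := csInf_le hbdd hmem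
  refine ⟨hle.trans hcond_le, ?_⟩
  intro hEq
  rw [channelEntropy] at hEq
  have hge : Real.log dB ≤ condEntropy τ := by
    rw [← hEq]
    exact csInf_le hbdd hmem
  have hcond : condEntropy τ = Real.log dB := le_antisymm hcond_le hge
  have hSτ : vnEntropy τ = Real.log (Fintype.card (Fin dB × Fin dA) : ℝ) := by
    rw [Fintype.card_prod, Fintype.card_fin, Fintype.card_fin, Nat.cast_mul,
      Real.log_mul hdBr hdAr]
    rw [condEntropy, hSpt] at hcond
    linarith
  have hτI : τ = ((Fintype.card (Fin dB × Fin dA) : ℂ))⁻¹ • 1 :=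
    vnEntropy_eq_log_imp hτd hSτ
  have hchoi : choi N = (dB:ℂ)⁻¹ • 1 := by
    have h1 : extendId N ((dA:ℂ)⁻¹ • PhiMat (Fin dA)) = (dA:ℂ)⁻¹ • choi N := by
      rw [extendId_smul]
      rfl
    have h2 : choi N = (dA:ℂ) • τ := by
      rw [hτ, hρME, h1, smul_smul, mul_inv_cancel₀ hdA', one_smul]
    rw [h2, hτI, Fintype.card_prod, Fintype.card_fin, Fintype.card_fin, smul_smul]
    congr 1
    rw [Nat.cast_mul]
    field_simp
  have hchoiD : choi (depol dA dB) = (dB:ℂ)⁻¹ • 1 := by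
    show extendId (depol dA dB) (PhiMat (Fin dA)) = _
    rw [extendId_depol, ptraceFst_phiMat, Matrix.one_kronecker_one]
  exact eq_of_choi_eq N (depol dA dB) (hchoi.trans hchoiD.symm)

end ThermalChannel
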